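/- arXiv:1409.4612 — 2 statements merged into one kernel-verified Lean document; each statement's English description precedes it below -/
import Mathlib

section
/- Let d ≥ 3, let e₁ = (1,0,…,0) ∈ ℝ^d, c_n = 2ⁿ e₁, and C_n = Q(c_n, 1/(2n)). For every κ > 0 there exists a constant c > 0, depending only on d and κ, such that for every integer n ≥ 2 and every y ∈ C_n one has ∫₀^∞ ∫_{C_n} n² s^{−d/2} exp(−|z − y|²/(κ s)) dz ds ≥ c. -/
open MeasureTheory
open scoped ENNReal

noncomputable section

/-- `ℝ^d` as a Euclidean space. -/
abbrev Rd (d : ℕ) := EuclideanSpace ℝ (Fin d)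

/-- The open cube `Q(c,r) = {y : max_i |c_i - y_i| < r}`. -/
def cubeSet {d : ℕ} (c : Rd d) (r : ℝ) : Set (Rd d) := {y | ∀ i, |c i - y i| < r}

/-- The first standard basis vector `e₁ = (1,0,…,0)`. -/
def e1 (d : ℕ) [NeZero d] : Rd d := EuclideanSpace.single 0 1

/-- The center `c_n = 2^n e₁`. -/
def cn (d : ℕ) [NeZero d] (n : ℕ) : Rd d := (2 : ℝ) ^ n • e1 d

/-- The cube `C_n = Q(c_n, 1/(2n))`. -/
def Ck (d : ℕ) [NeZero d] (n : ℕ) : Set (Rd d) := cubeSet (cn d n) (1 / (2 * n))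

/-- The shifted center `d_n = c_n + (τ/n) e₁`. -/
def dn (d : ℕ) [NeZero d] (τ : ℝ) (n : ℕ) : Rd d := cn d n + (τ / n) • e1 d

/-- The shifted cube `D_n = Q(d_n, 1/(2n))`. -/
def Dn (d : ℕ) [NeZero d] (τ : ℝ) (n : ℕ) : Set (Rd d) := cubeSet (dn d τ n) (1 / (2 * n))

lemma cubeSet_eq {d : ℕ} (c : Rd d) (r : ℝ) :
    cubeSet c r = (MeasurableEquiv.toLp 2 (Fin d → ℝ)).symm ⁻¹'
      (Set.univ.pi fun i => Set.Ioo (c i - r) (c i + r)) := by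
  ext y
  simp [cubeSet, MeasurableEquiv.coe_toLp_symm, Set.mem_pi, abs_sub_lt_iff,
    sub_lt_iff_lt_add, and_comm]
  constructor
  · intro h i; constructor <;> linarith [(h i).1, (h i).2]
  · intro h i; constructor <;> linarith [(h i).1, (h i).2]

lemma cubeSet_measurable {d : ℕ} (c : Rd d) (r : ℝ) : MeasurableSet (cubeSet c r) := by
  rw [cubeSet_eq]
  exact (MeasurableEquiv.toLp 2 (Fin d → ℝ)).symm.measurable
    (MeasurableSet.univ_pi fun i => measurableSet_Ioo)

lemma cubeSet_volume {d : ℕ} (c : Rd d) (r : ℝ) :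
    volume (cubeSet c r) = ENNReal.ofReal (2 * r) ^ d := by
  rw [cubeSet_eq, (EuclideanSpace.volume_preserving_symm_measurableEquiv_toLp (Fin d)).measure_preimage
    ((MeasurableSet.univ_pi fun i => measurableSet_Ioo).nullMeasurableSet)]
  rw [volume_pi_pi]
  simp [Real.volume_Ioo]
  ring_nf
  rw [ENNReal.ofReal_mul' (by norm_num), ENNReal.ofReal_ofNat, mul_pow]

/-- for every `κ > 0` there is `c > 0`, depending only on `d` and `κ`, such
that for every `n ≥ 2` and `y ∈ C_n`,
`∫₀^∞ ∫_{C_n} n² s^{-d/2} exp(-|z-y|²/(κs)) dz ds ≥ c`. -/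
theorem statement9 (d : ℕ) [NeZero d] (hd : 3 ≤ d) (κ : ℝ) (hκ : 0 < κ) :
    ∃ c > (0 : ℝ), ∀ n : ℕ, 2 ≤ n → ∀ y ∈ Ck d n,
      ENNReal.ofReal c ≤
        ∫⁻ s in Set.Ioi (0 : ℝ), ∫⁻ z in Ck d n,
          ENNReal.ofReal ((n : ℝ) ^ 2 * s ^ (-(d : ℝ) / 2) *
            Real.exp (-‖z - y‖ ^ 2 / (κ * s))) := by
  refine ⟨(2 : ℝ) ^ (-(d : ℝ)/2) * Real.exp (-(d : ℝ)/κ), by positivity, ?_⟩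
  intro n hn y hy
  have hN : (0 : ℝ) < (n : ℝ) := by exact_mod_cast Nat.cast_pos.mpr (show 0 < n by omega)
  set N : ℝ := (n : ℝ) with hNdef
  have hN2 : (0 : ℝ) < N ^ 2 := by positivity
  have hEpos : 0 < (2 : ℝ) / N ^ 2 := by positivity
  set K : ℝ := N ^ 2 * ((2 : ℝ) / N ^ 2) ^ (-(d : ℝ)/2) * Real.exp (-(d : ℝ)/κ) with hKdef
  have hKnonneg : 0 ≤ K := by positivity
  have hexp_le : -(d : ℝ)/2 ≤ 0 := by
    have : (0 : ℝ) ≤ (d : ℝ) := Nat.cast_nonneg d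
    linarith
  -- coordinate bound
  have hcoord : ∀ z ∈ Ck d n, ∀ i, |z i - y i| ≤ 1 / N := by
    intro z hz i
    have h1 : |cn d n i - z i| < 1 / (2 * N) := hz i
    have h2 : |cn d n i - y i| < 1 / (2 * N) := hy i
    calc |z i - y i| = |(cn d n i - y i) - (cn d n i - z i)| := by ring_nf
      _ ≤ |cn d n i - y i| + |cn d n i - z i| := abs_sub _ _
      _ ≤ 1 / N := by
          have hs : 1 / (2 * N) + 1 / (2 * N) = 1 / N := by
            field_simp
            ring
          linarith
  have hnorm : ∀ z ∈ Ck d n, ‖z - y‖ ^ 2 ≤ (d : ℝ) / N ^ 2 := by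
    intro z hz
    rw [EuclideanSpace.norm_eq, Real.sq_sqrt (by positivity)]
    calc ∑ i, ‖(z - y) i‖ ^ 2 ≤ ∑ _i : Fin d, (1 / N) ^ 2 := by
          refine Finset.sum_le_sum fun i _ => ?_
          have h := hcoord z hz i
          have : ‖(z - y) i‖ = |z i - y i| := by
            simp [PiLp.sub_apply, Real.norm_eq_abs]
          rw [this]
          exact pow_le_pow_left₀ (abs_nonneg _) h 2
      _ = (d : ℝ) * (1 / N) ^ 2 := by simp [Finset.sum_const, Finset.card_univ]
      _ = (d : ℝ) / N ^ 2 := by field_simp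
  -- pointwise bound on the strip
  have key : ∀ s ∈ Set.Ioo (1 / N ^ 2) (2 / N ^ 2), ∀ z ∈ Ck d n,
      K ≤ N ^ 2 * s ^ (-(d : ℝ)/2) * Real.exp (-‖z - y‖ ^ 2 / (κ * s)) := by
    intro s hs z hz
    have hspos : 0 < s := lt_trans (by positivity) hs.1
    have h1 : ((2 : ℝ) / N ^ 2) ^ (-(d : ℝ)/2) ≤ s ^ (-(d : ℝ)/2) :=
      Real.rpow_le_rpow_of_nonpos hspos hs.2.le hexp_le
    have h2 : Real.exp (-(d : ℝ)/κ) ≤ Real.exp (-‖z - y‖ ^ 2 / (κ * s)) := by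
      rw [Real.exp_le_exp, neg_div, neg_div, neg_le_neg_iff]
      calc ‖z - y‖ ^ 2 / (κ * s) ≤ ((d : ℝ) / N ^ 2) / (κ * (1 / N ^ 2)) := by
            refine div_le_div₀ (by positivity) (hnorm z hz) (by positivity) ?_
            have := hs.1
            nlinarith
        _ = (d : ℝ) / κ := by field_simp
    rw [hKdef]
    gcongr
  -- volume computations
  have hvolCk : volume (Ck d n) = ENNReal.ofReal (1 / N) ^ d := by
    rw [Ck, cubeSet_volume]
    congr 2
    field_simp
    rfl
  have hsubset : Set.Ioo (1 / N ^ 2) (2 / N ^ 2) ⊆ Set.Ioi (0 : ℝ) := by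
    intro s hs; exact lt_trans (by positivity) hs.1
  have main : ENNReal.ofReal K * volume (Ck d n) * ENNReal.ofReal (1 / N ^ 2) ≤
      ∫⁻ s in Set.Ioi (0 : ℝ), ∫⁻ z in Ck d n,
        ENNReal.ofReal ((n : ℝ) ^ 2 * s ^ (-(d : ℝ)/2) *
          Real.exp (-‖z - y‖ ^ 2 / (κ * s))) := by
    calc ENNReal.ofReal K * volume (Ck d n) * ENNReal.ofReal (1 / N ^ 2)
        = (ENNReal.ofReal K * volume (Ck d n)) *
            volume (Set.Ioo (1 / N ^ 2) (2 / N ^ 2)) := by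
          rw [Real.volume_Ioo]
          congr 1
          rw [show (2 : ℝ) / N ^ 2 - 1 / N ^ 2 = 1 / N ^ 2 by ring]
      _ = ∫⁻ _s in Set.Ioo (1 / N ^ 2) (2 / N ^ 2),
            (ENNReal.ofReal K * volume (Ck d n)) := (setLIntegral_const _ _).symm
      _ ≤ ∫⁻ s in Set.Ioo (1 / N ^ 2) (2 / N ^ 2), ∫⁻ z in Ck d n,
            ENNReal.ofReal ((n : ℝ) ^ 2 * s ^ (-(d : ℝ)/2) *
              Real.exp (-‖z - y‖ ^ 2 / (κ * s))) := by
          refine setLIntegral_mono' measurableSet_Ioo fun s hs => ?_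
          calc ENNReal.ofReal K * volume (Ck d n)
              = ∫⁻ _z in Ck d n, ENNReal.ofReal K := (setLIntegral_const _ _).symm
            _ ≤ _ := setLIntegral_mono' (cubeSet_measurable _ _) fun z hz =>
                ENNReal.ofReal_le_ofReal (key s hs z hz)
      _ ≤ _ := lintegral_mono_set hsubset
  refine le_trans ?_ main
  rw [hvolCk, ← ENNReal.ofReal_pow (by positivity), ← ENNReal.ofReal_mul hKnonneg,
    ← ENNReal.ofReal_mul (by positivity)]
  refine ENNReal.ofReal_le_ofReal (le_of_eq ?_)
  -- the real-number identity
  have h1 : ((2 : ℝ) / N ^ 2) ^ (-(d : ℝ)/2) = 2 ^ (-(d : ℝ)/2) * (N ^ 2) ^ ((d : ℝ)/2) := by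
    rw [Real.div_rpow (by norm_num) hN2.le, show (-(d : ℝ)/2) = -((d : ℝ)/2) by ring,
      Real.rpow_neg hN2.le, div_eq_mul_inv, inv_inv]
  have h2 : ((N : ℝ) ^ 2) ^ ((d : ℝ)/2) = N ^ d := by
    rw [← Real.rpow_natCast N 2, ← Real.rpow_mul hN.le,
      show ((2 : ℕ) : ℝ) * ((d : ℝ)/2) = (d : ℝ) by push_cast; ring, Real.rpow_natCast]
  rw [hKdef, h1, h2]
  have hNd : (0 : ℝ) < N ^ d := by positivity
  field_simp
  ring
  rw [← mul_pow, mul_inv_cancel₀ hN.ne', one_pow]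
end
end

section
/- Let d ≥ 1, let e₁ = (1,0,…,0) ∈ ℝ^d, c_n = 2ⁿ e₁, and C_n = Q(c_n, 1/(2n)). Let τ > 1, n ≥ 1, t > 0, and let x ∈ ℝ^d with x₁ < 2ⁿ. Then ∫_{C_n} [ exp(−|x − y|²/(4t)) − exp(−|x − y − (τ/n) e₁|²/(4t)) ] dy ≥ 0. -/
open MeasureTheory
open scoped ENNReal

noncomputable section

/-- for `d ≥ 1`, `τ > 1`, `n ≥ 1`, `t > 0` and `x` with `x₁ < 2ⁿ`,
`∫_{C_n} [exp(-|x-y|²/(4t)) - exp(-|x-y-(τ/n)e₁|²/(4t))] dy ≥ 0`. -/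
theorem statement13 (d : ℕ) [NeZero d] (hd : 1 ≤ d) (τ : ℝ) (hτ : 1 < τ)
    (n : ℕ) (hn : 1 ≤ n) (t : ℝ) (ht : 0 < t) (x : Rd d) (hx : x 0 < (2 : ℝ) ^ n) :
    0 ≤ ∫ y in Ck d n,
      (Real.exp (-‖x - y‖ ^ 2 / (4 * t)) -
        Real.exp (-‖x - y - (τ / n) • e1 d‖ ^ 2 / (4 * t))) := by
  have hnpos : (0:ℝ) < n := by exact_mod_cast hn
  have hmeas : MeasurableSet (Ck d n) := by
    have hck : Ck d n = ⋂ i, {y : Rd d | |cn d n i - y i| < 1 / (2 * n)} := by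
      ext y; simp [Ck, cubeSet, Set.mem_iInter]
    rw [hck]
    refine MeasurableSet.iInter fun i => ?_
    exact (isOpen_lt (by fun_prop) continuous_const).measurableSet
  refine setIntegral_nonneg hmeas fun y hy => ?_
  have hy0 : |cn d n 0 - y 0| < 1 / (2 * n) := hy 0
  have hcn0 : cn d n 0 = (2:ℝ) ^ n := by
    simp [cn, e1, PiLp.smul_apply, EuclideanSpace.single_apply]
  set s : ℝ := τ / n with hs
  have hspos : 0 < s := div_pos (lt_trans one_pos hτ) hnpos
  have hinner : inner ℝ (x - y) ((τ / n) • e1 d) = s * (x 0 - y 0) := by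
    rw [real_inner_smul_right]
    have h0 : inner ℝ (x - y) (e1 d) = (x - y) 0 := by
      unfold e1
      rw [EuclideanSpace.inner_single_right]
      simp
    rw [h0]
    simp [hs]
  have hne1 : ‖(τ / n) • e1 d‖ ^ 2 = s ^ 2 := by
    rw [norm_smul]
    simp only [e1, EuclideanSpace.norm_single, Real.norm_eq_abs, norm_one, mul_one]
    rw [sq_abs]
  have hkey : ‖x - y‖ ^ 2 ≤ ‖x - y - (τ / n) • e1 d‖ ^ 2 := by
    have hexp := norm_sub_sq_real (x - y) ((τ / n) • e1 d)
    rw [hexp, hinner, hne1]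
    have h1 : x 0 - y 0 < 1 / (2 * n) := by
      have hy0' := abs_lt.mp hy0
      rw [hcn0] at hy0'
      linarith [hy0'.2]
    have h2 : 2 * (x 0 - y 0) < s := by
      have hτn : 1 / (n:ℝ) ≤ τ / n := by gcongr
      have h3 : 2 * (x 0 - y 0) < 1 / n := by
        rw [show (1:ℝ)/n = 2 * (1/(2*n)) by field_simp]
        linarith
      linarith
    nlinarith
  have hmono : Real.exp (-‖x - y - (τ / n) • e1 d‖ ^ 2 / (4 * t)) ≤
      Real.exp (-‖x - y‖ ^ 2 / (4 * t)) := by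
    apply Real.exp_le_exp.mpr
    apply div_le_div_of_nonneg_right (c := 4 * t) (by linarith) (by linarith)
  linarith
end
end
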